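/- arXiv:2511.02272 — 3 statements merged into one kernel-verified Lean document; each statement's English description precedes it below -/
import Mathlib

section
/- For m ∈ ℕ, b > 0, c > b, the function f(z) = ₂F₁(-m, b; c; z) is convex on [0,1] and Lipschitz with constant L = mb/c, i.e. |f(z₁) - f(z₂)| ≤ (mb/c)|z₁ - z₂| for all z₁, z₂ ∈ [0,1]. -/
/-- The truncated Gauss hypergeometric polynomial
`₂F₁(-m,b;c;z) = ∑_{k=0}^m (-m)_k (b)_k / ((c)_k k!) z^k`. -/
noncomputable def hypF (m : ℕ) (b c z : ℝ) : ℝ :=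
  ∑ k ∈ Finset.range (m + 1),
    (∏ r ∈ Finset.range k, (-(m : ℝ) + r)) * (∏ r ∈ Finset.range k, (b + r)) /
      ((∏ r ∈ Finset.range k, (c + r)) * (Nat.factorial k : ℝ)) * z ^ k

namespace HypAux

open Finset

/-- The `k`-th coefficient of `hypF`. -/
noncomputable def hypC (m : ℕ) (b c : ℝ) (k : ℕ) : ℝ :=
  (∏ r ∈ Finset.range k, (-(m : ℝ) + r)) * (∏ r ∈ Finset.range k, (b + r)) /
    ((∏ r ∈ Finset.range k, (c + r)) * (Nat.factorial k : ℝ))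

lemma hypF_eq (m : ℕ) (b c z : ℝ) :
    hypF m b c z = ∑ k ∈ range (m + 1), hypC m b c k * z ^ k := rfl

lemma prodc_pos {c : ℝ} (hc : 0 < c) (k : ℕ) : 0 < ∏ r ∈ range k, (c + (r : ℝ)) :=
  Finset.prod_pos fun r _ => by positivity

lemma prod_shift (c : ℝ) (k : ℕ) :
    c * ∏ r ∈ range k, (c + 1 + (r : ℝ)) = (∏ r ∈ range k, (c + (r : ℝ))) * (c + k) := by
  have h2 := Finset.prod_range_succ' (fun r : ℕ => c + (r : ℝ)) k
  rw [Finset.prod_range_succ] at h2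
  have h3 : ∏ r ∈ range k, (c + ((r : ℝ) + 1)) = ∏ r ∈ range k, (c + 1 + (r : ℝ)) :=
    Finset.prod_congr rfl fun r _ => by ring
  push_cast at h2
  rw [h3] at h2
  rw [h2]; ring

lemma hypC_zero (m : ℕ) (b c : ℝ) : hypC m b c 0 = 1 := by
  simp [hypC]

lemma hypC_top (m : ℕ) (b c : ℝ) : hypC m b c (m + 1) = 0 := by
  have : (∏ r ∈ range (m + 1), (-(m : ℝ) + r)) = 0 :=
    Finset.prod_eq_zero (Finset.self_mem_range_succ m) (by ring)
  simp [hypC, this]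

lemma hypC_rec (m k : ℕ) (b c : ℝ) (hc : 0 < c) :
    hypC (m + 1) b c (k + 1)
      = hypC m b c (k + 1) - hypC m b c k + (c - b) / c * hypC m b (c + 1) k := by
  have hC : (0 : ℝ) < ∏ r ∈ range k, (c + (r : ℝ)) := prodc_pos hc k
  have hC' : (0 : ℝ) < ∏ r ∈ range k, (c + 1 + (r : ℝ)) := prodc_pos (by linarith) k
  have hck : (0 : ℝ) < c + k := by positivity
  have hfac : ((Nat.factorial k : ℝ)) ≠ 0 := Nat.cast_ne_zero.mpr k.factorial_ne_zero
  have e1 : (∏ r ∈ range (k + 1), (-((m : ℝ) + 1) + r))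
      = (∏ r ∈ range k, (-(m : ℝ) + r)) * (-(m : ℝ) - 1) := by
    rw [Finset.prod_range_succ']
    push_cast
    have : ∏ r ∈ range k, (-((m : ℝ) + 1) + ((r : ℝ) + 1)) = ∏ r ∈ range k, (-(m : ℝ) + r) :=
      Finset.prod_congr rfl fun r _ => by ring
    rw [this]; ring
  have e2 : (∏ r ∈ range (k + 1), (-(m : ℝ) + r))
      = (∏ r ∈ range k, (-(m : ℝ) + r)) * (-(m : ℝ) + k) := Finset.prod_range_succ _ _
  have e3 : (∏ r ∈ range (k + 1), (b + (r : ℝ)))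
      = (∏ r ∈ range k, (b + (r : ℝ))) * (b + k) := Finset.prod_range_succ _ _
  have e4 : (∏ r ∈ range (k + 1), (c + (r : ℝ)))
      = (∏ r ∈ range k, (c + (r : ℝ))) * (c + k) := Finset.prod_range_succ _ _
  have e5 : (∏ r ∈ range k, (c + 1 + (r : ℝ)))
      = (∏ r ∈ range k, (c + (r : ℝ))) * (c + k) / c := by
    field_simp
    linarith [prod_shift c k]
  have efac : ((Nat.factorial (k + 1) : ℝ)) = ((k : ℝ) + 1) * (Nat.factorial k : ℝ) := by
    rw [Nat.factorial_succ]; push_cast; ring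
  unfold hypC
  push_cast
  rw [e1, e2, e3, e4, e5, efac]
  field_simp
  ring

lemma hypC_deriv (m k : ℕ) (b c : ℝ) (hc : 0 < c) :
    ((k : ℝ) + 1) * hypC (m + 1) b c (k + 1)
      = -(((m : ℝ) + 1) * b / c) * hypC m (b + 1) (c + 1) k := by
  have hC : (0 : ℝ) < ∏ r ∈ range k, (c + 1 + (r : ℝ)) := prodc_pos (by linarith) k
  have hfac : ((Nat.factorial k : ℝ)) ≠ 0 := Nat.cast_ne_zero.mpr k.factorial_ne_zero
  have e1 : (∏ r ∈ range (k + 1), (-((m : ℝ) + 1) + r))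
      = (∏ r ∈ range k, (-(m : ℝ) + r)) * (-(m : ℝ) - 1) := by
    rw [Finset.prod_range_succ']
    push_cast
    have : ∏ r ∈ range k, (-((m : ℝ) + 1) + ((r : ℝ) + 1)) = ∏ r ∈ range k, (-(m : ℝ) + r) :=
      Finset.prod_congr rfl fun r _ => by ring
    rw [this]; ring
  have e3 : (∏ r ∈ range (k + 1), (b + (r : ℝ)))
      = (∏ r ∈ range k, (b + 1 + (r : ℝ))) * b := by
    rw [Finset.prod_range_succ']
    push_cast
    have : ∏ r ∈ range k, (b + ((r : ℝ) + 1)) = ∏ r ∈ range k, (b + 1 + (r : ℝ)) :=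
      Finset.prod_congr rfl fun r _ => by ring
    rw [this]; ring
  have e4 : (∏ r ∈ range (k + 1), (c + (r : ℝ)))
      = (∏ r ∈ range k, (c + 1 + (r : ℝ))) * c := by
    rw [Finset.prod_range_succ']
    push_cast
    have : ∏ r ∈ range k, (c + ((r : ℝ) + 1)) = ∏ r ∈ range k, (c + 1 + (r : ℝ)) :=
      Finset.prod_congr rfl fun r _ => by ring
    rw [this]; ring
  have efac : ((Nat.factorial (k + 1) : ℝ)) = ((k : ℝ) + 1) * (Nat.factorial k : ℝ) := by
    rw [Nat.factorial_succ]; push_cast; ring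
  unfold hypC
  push_cast
  rw [e1, e3, e4, efac]
  field_simp
  ring

lemma hypF_rec (m : ℕ) (b c : ℝ) (hc : 0 < c) (z : ℝ) :
    hypF (m + 1) b c z
      = (1 - z) * hypF m b c z + z * ((c - b) / c) * hypF m b (c + 1) z := by
  have key : ∀ k ∈ range (m + 1),
      hypC (m + 1) b c (k + 1) * z ^ (k + 1)
        = hypC m b c (k + 1) * z ^ (k + 1) - z * (hypC m b c k * z ^ k)
            + z * ((c - b) / c) * (hypC m b (c + 1) k * z ^ k) := by
    intro k _
    rw [hypC_rec m k b c hc]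
    ring
  have hS1 : ∑ k ∈ range (m + 1), hypC m b c k * z ^ k
      = (∑ k ∈ range (m + 1), hypC m b c (k + 1) * z ^ (k + 1)) + 1 := by
    have h1 : ∑ k ∈ range (m + 2), hypC m b c k * z ^ k
        = ∑ k ∈ range (m + 1), hypC m b c k * z ^ k := by
      rw [Finset.sum_range_succ, hypC_top]; ring
    have h2 := Finset.sum_range_succ' (fun k => hypC m b c k * z ^ k) (m + 1)
    rw [h1] at h2
    rw [h2, hypC_zero]; ring
  have hL := Finset.sum_range_succ' (fun k => hypC (m + 1) b c k * z ^ k) (m + 1)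
  rw [hypF_eq, hypF_eq, hypF_eq, hL, Finset.sum_congr rfl key, hypC_zero,
    Finset.sum_add_distrib, Finset.sum_sub_distrib, ← Finset.mul_sum, ← Finset.mul_sum, hS1]
  ring

lemma hypF_mem (m : ℕ) : ∀ b c : ℝ, 0 < b → b < c → ∀ z ∈ Set.Icc (0 : ℝ) 1,
    hypF m b c z ∈ Set.Icc (0 : ℝ) 1 := by
  induction m with
  | zero =>
      intro b c hb hc z hz
      simp [hypF_eq, hypC_zero]
  | succ n ih =>
      intro b c hb hc z hz
      have hc0 : 0 < c := hb.trans hc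
      obtain ⟨hz0, hz1⟩ := hz
      have h1 := ih b c hb hc z ⟨hz0, hz1⟩
      have h2 := ih b (c + 1) hb (by linarith) z ⟨hz0, hz1⟩
      obtain ⟨h10, h11⟩ := h1
      obtain ⟨h20, h21⟩ := h2
      have hq0 : 0 < (c - b) / c := div_pos (by linarith) hc0
      have hq1 : (c - b) / c ≤ 1 := by
        rw [div_le_one hc0]; linarith
      rw [hypF_rec n b c hc0 z]
      have t1 : (1 - z) * hypF n b c z ≤ 1 - z := mul_le_of_le_one_right (by linarith) h11
      have t0 : 0 ≤ (1 - z) * hypF n b c z := mul_nonneg (by linarith) h10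
      have t2 : z * ((c - b) / c) * hypF n b (c + 1) z ≤ z * ((c - b) / c) :=
        mul_le_of_le_one_right (mul_nonneg hz0 hq0.le) h21
      have t3 : z * ((c - b) / c) ≤ z := mul_le_of_le_one_right hz0 hq1
      have t4 : 0 ≤ z * ((c - b) / c) * hypF n b (c + 1) z :=
        mul_nonneg (mul_nonneg hz0 hq0.le) h20
      constructor
      · linarith
      · linarith

lemma hasDerivAt_hypF (m : ℕ) (b c : ℝ) (hc : 0 < c) (z : ℝ) :
    HasDerivAt (hypF m b c)
      (-((m : ℝ) * b / c) * hypF (m - 1) (b + 1) (c + 1) z) z := by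
  cases m with
  | zero =>
      have h : hypF 0 b c = fun _ => (1 : ℝ) := funext fun w => by simp [hypF_eq, hypC_zero]
      rw [h]
      simpa using hasDerivAt_const z (1 : ℝ)
  | succ n =>
      have h : HasDerivAt (hypF (n + 1) b c)
          (∑ k ∈ range (n + 2), hypC (n + 1) b c k * ((k : ℝ) * z ^ (k - 1))) z := by
        rw [show hypF (n + 1) b c
            = fun w => ∑ k ∈ range (n + 2), hypC (n + 1) b c k * w ^ k from rfl]
        apply HasDerivAt.fun_sum
        intro k _
        exact (hasDerivAt_pow k z).const_mul (hypC (n + 1) b c k)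
      have e : (∑ k ∈ range (n + 2), hypC (n + 1) b c k * ((k : ℝ) * z ^ (k - 1)))
          = -(((n : ℝ) + 1) * b / c) * hypF n (b + 1) (c + 1) z := by
        rw [Finset.sum_range_succ' (fun k => hypC (n + 1) b c k * ((k : ℝ) * z ^ (k - 1))) (n + 1)]
        rw [hypF_eq, Finset.mul_sum]
        simp only [Nat.cast_zero, zero_mul, mul_zero, add_zero]
        refine Finset.sum_congr rfl fun k _ => ?_
        have hk := hypC_deriv n k b c hc
        have : hypC (n + 1) b c (k + 1) * ((((k + 1 : ℕ)) : ℝ) * z ^ (k + 1 - 1))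
            = (((k : ℝ) + 1) * hypC (n + 1) b c (k + 1)) * z ^ k := by
          push_cast
          ring
        rw [this, hk]
        ring
      rw [e] at h
      simpa using h
  
lemma hypF_differentiable (m : ℕ) (b c : ℝ) (hc : 0 < c) :
    Differentiable ℝ (hypF m b c) :=
  fun z => (hasDerivAt_hypF m b c hc z).differentiableAt

lemma deriv_hypF (m : ℕ) (b c : ℝ) (hc : 0 < c) :
    deriv (hypF m b c) = fun z => -((m : ℝ) * b / c) * hypF (m - 1) (b + 1) (c + 1) z :=
  funext fun z => (hasDerivAt_hypF m b c hc z).deriv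

end HypAux

/-- For `m ∈ ℕ`, `b > 0`, `c > b`, `z ↦ ₂F₁(-m,b;c;z)` is convex on `[0,1]` and
Lipschitz there with constant `m b / c`. -/
theorem hypF_convex_and_lipschitz (m : ℕ) (b c : ℝ) (hb : 0 < b) (hc : b < c) :
    ConvexOn ℝ (Set.Icc (0:ℝ) 1) (hypF m b c) ∧
      ∀ z₁ ∈ Set.Icc (0:ℝ) 1, ∀ z₂ ∈ Set.Icc (0:ℝ) 1,
        |hypF m b c z₁ - hypF m b c z₂| ≤ (m * b / c) * |z₁ - z₂| := by
  have hc0 : 0 < c := hb.trans hc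
  have hc1 : (0 : ℝ) < c + 1 := by linarith
  constructor
  · -- convexity
    apply convexOn_of_deriv2_nonneg (convex_Icc 0 1)
    · exact (HypAux.hypF_differentiable m b c hc0).continuous.continuousOn
    · exact (HypAux.hypF_differentiable m b c hc0).differentiableOn
    · rw [HypAux.deriv_hypF m b c hc0]
      exact (((HypAux.hypF_differentiable (m - 1) (b + 1) (c + 1) hc1).const_mul
        (-((m : ℝ) * b / c)))).differentiableOn
    · intro x hx
      rw [interior_Icc] at hx
      have hx' : x ∈ Set.Icc (0 : ℝ) 1 := ⟨hx.1.le, hx.2.le⟩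
      have h2 : deriv^[2] (hypF m b c) x = deriv (deriv (hypF m b c)) x := rfl
      rw [h2, HypAux.deriv_hypF m b c hc0]
      have hd := ((HypAux.hasDerivAt_hypF (m - 1) (b + 1) (c + 1) hc1 x).const_mul
        (-((m : ℝ) * b / c)))
      rw [hd.deriv]
      have hmem := HypAux.hypF_mem (m - 1 - 1) (b + 2) (c + 2) (by linarith) (by linarith) x hx'
      have h1 : (0 : ℝ) ≤ (m : ℝ) * b / c := by positivity
      have h3 : (0 : ℝ) ≤ ((m - 1 : ℕ) : ℝ) * (b + 1) / (c + 1) := by positivity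
      have hb2 : hypF (m - 1 - 1) (b + 1 + 1) (c + 1 + 1) x
          = hypF (m - 1 - 1) (b + 2) (c + 2) x := by
        rw [show b + 1 + 1 = b + 2 from by ring, show c + 1 + 1 = c + 2 from by ring]
      rw [hb2]
      nlinarith [mul_nonneg (mul_nonneg h1 h3) hmem.1]
  · -- Lipschitz
    intro z₁ hz₁ z₂ hz₂
    have key := Convex.norm_image_sub_le_of_norm_hasDerivWithin_le
      (f := hypF m b c)
      (f' := fun z => -((m : ℝ) * b / c) * hypF (m - 1) (b + 1) (c + 1) z)
      (C := (m : ℝ) * b / c)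
      (fun x _ => (HypAux.hasDerivAt_hypF m b c hc0 x).hasDerivWithinAt)
      (fun x hx => by
        have hmem := HypAux.hypF_mem (m - 1) (b + 1) (c + 1) (by linarith) (by linarith) x hx
        have h1 : (0 : ℝ) ≤ (m : ℝ) * b / c := by positivity
        rw [Real.norm_eq_abs, abs_mul, abs_neg, abs_of_nonneg h1,
          abs_of_nonneg hmem.1]
        exact mul_le_of_le_one_right h1 hmem.2)
      (convex_Icc 0 1) hz₂ hz₁
    rw [Real.norm_eq_abs, Real.norm_eq_abs] at key
    exact key
end

section
/- Let α₁,…,α_m ∈ [0,1] with mean ᾱ and variance V, β > 0, q > 0. Then 0 ≤ ∫₀¹ t^{q-1}(1 - ᾱ + ᾱt^β)^m dt - ∫₀¹ t^{q-1}∏ᵢ(1 - αᵢ + αᵢt^β) dt ≤ (m/2)V ∫₀¹ t^{q-1}(1 - ᾱ + ᾱt^β)^m (1-t^β)²/t^{2β} dt. -/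
open Real MeasureTheory


lemma log_upper (u : ℝ) (hu : 1 ≤ u) : Real.log u ≤ (u^2 - 1)/(2*u) := by
  rcases eq_or_lt_of_le hu with h | h
  · simp [← h]
  · have h0 : 0 < u := by linarith
    have h1 : Real.log u < Real.sinh (Real.log u) :=
      Real.self_lt_sinh_iff.mpr (Real.log_pos h)
    rw [Real.sinh_log h0] at h1
    have : (u - u⁻¹)/2 = (u^2 - 1)/(2*u) := by field_simp
    linarith [this ▸ h1]

lemma log_lower (v : ℝ) (hv : 1 ≤ v) : (v - 1) - (v - 1)^2 / 2 ≤ Real.log v := by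
  set g : ℝ → ℝ := fun w => Real.log w - (w - 1) + (w - 1)^2 / 2 with hg
  have key : MonotoneOn g (Set.Ici 1) := by
    have hderiv : ∀ w : ℝ, 1 ≤ w → HasDerivAt g (w⁻¹ - 1 + (w - 1)) w := by
      intro w hw
      have hw0 : w ≠ 0 := by positivity
      have h1 : HasDerivAt Real.log w⁻¹ w := Real.hasDerivAt_log hw0
      have h2 : HasDerivAt (fun w : ℝ => w - 1) 1 w := (hasDerivAt_id w).sub_const 1
      have h3 : HasDerivAt (fun w : ℝ => (w - 1)^2 / 2) ((2 * (w-1)^1 * 1)/2) w :=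
        (h2.pow 2).div_const 2
      have := (h1.sub h2).add h3
      exact this.congr_deriv (by ring)
    apply monotoneOn_of_deriv_nonneg (convex_Ici 1)
    · intro w hw
      exact ((hderiv w hw).continuousAt).continuousWithinAt
    · intro w hw
      rw [interior_Ici] at hw
      exact (hderiv w hw.le).differentiableAt.differentiableWithinAt
    · intro w hw
      rw [interior_Ici] at hw
      rw [(hderiv w hw.le).deriv]
      have hw0 : 0 < w := by linarith [hw.out]
      have hinv : w * w⁻¹ = 1 := mul_inv_cancel₀ hw0.ne'
      nlinarith [sq_nonneg (w-1), hinv, inv_pos.mpr hw0]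
  have h1 : g 1 ≤ g v := key (by simp) hv hv
  have : g 1 = 0 := by simp [hg]
  rw [this] at h1
  simp only [hg] at h1
  linarith

lemma log_quad (x a A : ℝ) (hx : 0 < x) (ha : x ≤ a) (hA : x ≤ A) :
    Real.log A - Real.log a ≤ (A - a)/A + (a - A)^2/(2*x^2) := by
  have ha0 : 0 < a := hx.trans_le ha
  have hA0 : 0 < A := hx.trans_le hA
  rcases le_total a A with h | h
  · have hu : 1 ≤ A / a := (one_le_div ha0).mpr h
    have h1 := log_upper (A/a) hu
    rw [Real.log_div hA0.ne' ha0.ne'] at h1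
    have e : ((A/a)^2 - 1)/(2*(A/a)) = (A - a)/A + (A - a)^2/(2*(a*A)) := by
      field_simp
      ring
    rw [e] at h1
    have h2 : (A - a)^2/(2*(a*A)) ≤ (a - A)^2/(2*x^2) := by
      have : (A - a)^2 = (a - A)^2 := by ring
      rw [this]
      apply div_le_div_of_nonneg_left (by positivity) (by positivity)
      nlinarith
    linarith
  · have hv : 1 ≤ a / A := (one_le_div hA0).mpr h
    have h1 := log_lower (a/A) hv
    rw [Real.log_div ha0.ne' hA0.ne'] at h1
    have e : -((a/A - 1) - (a/A - 1)^2/2) = (A - a)/A + (a - A)^2/(2*A^2) := by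
      field_simp
      ring
    have h2 : (a - A)^2/(2*A^2) ≤ (a - A)^2/(2*x^2) := by
      apply div_le_div_of_nonneg_left (by positivity) (by positivity)
      nlinarith
    nlinarith [h1, h2, e]

lemma prod_gap (m : ℕ) (hm : 0 < m) (a : Fin m → ℝ) (x A : ℝ) (hx : 0 < x)
    (ha : ∀ i, x ≤ a i) (hA : (m:ℝ) * A = ∑ i, a i) :
    ∏ i, a i ≤ A^m ∧ A^m - ∏ i, a i ≤ A^m * ((∑ i, (a i - A)^2)/(2*x^2)) := by
  have hm' : (0:ℝ) < m := by exact_mod_cast hm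
  have hxA : x ≤ A := by
    have h1 : (m:ℝ) * x ≤ ∑ i, a i := by
      calc (m:ℝ) * x = ∑ _i : Fin m, x := by simp [mul_comm]
      _ ≤ _ := Finset.sum_le_sum (fun i _ => ha i)
    rw [← hA] at h1
    exact le_of_mul_le_mul_left h1 hm'
  have hA0 : 0 < A := hx.trans_le hxA
  have hai : ∀ i, 0 < a i := fun i => hx.trans_le (ha i)
  set S : ℝ := ∑ i, (Real.log (a i) - Real.log A) with hS
  have hprod : ∏ i, a i = A^m * Real.exp S := by
    rw [hS, Real.exp_sum]
    rw [show A^m = ∏ _i : Fin m, A by simp, ← Finset.prod_mul_distrib]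
    refine Finset.prod_congr rfl fun i _ => ?_
    rw [Real.exp_sub, Real.exp_log (hai i), Real.exp_log hA0]
    field_simp
  have hS_le : S ≤ 0 := by
    have h1 : ∀ i : Fin m, Real.log (a i) - Real.log A ≤ a i / A - 1 := by
      intro i
      have := Real.log_le_sub_one_of_pos (div_pos (hai i) hA0)
      rwa [Real.log_div (hai i).ne' hA0.ne'] at this
    have h2 : S ≤ ∑ i, (a i / A - 1) := Finset.sum_le_sum fun i _ => h1 i
    have h3 : ∑ i : Fin m, (a i / A - 1) = 0 := by
      rw [Finset.sum_sub_distrib, ← Finset.sum_div, ← hA]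
      field_simp
      simp
    linarith
  have hApow : (0:ℝ) ≤ A^m := by positivity
  constructor
  · rw [hprod]
    nlinarith [Real.exp_le_one_iff.mpr hS_le]
  · have hnegS : -S ≤ (∑ i, (a i - A)^2)/(2*x^2) := by
      have h1 : -S = ∑ i, (Real.log A - Real.log (a i)) := by
        rw [hS, ← Finset.sum_neg_distrib]
        exact Finset.sum_congr rfl fun i _ => by ring
      have h2 : ∀ i : Fin m, Real.log A - Real.log (a i) ≤
          (A - a i)/A + (a i - A)^2/(2*x^2) := fun i => log_quad x (a i) A hx (ha i) hxA
      have h3 : -S ≤ ∑ i, ((A - a i)/A + (a i - A)^2/(2*x^2)) := by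
        rw [h1]; exact Finset.sum_le_sum fun i _ => h2 i
      have h4 : ∑ i : Fin m, ((A - a i)/A + (a i - A)^2/(2*x^2)) =
          ((m:ℝ)*A - ∑ i, a i)/A + (∑ i, (a i - A)^2)/(2*x^2) := by
        rw [Finset.sum_add_distrib, ← Finset.sum_div, ← Finset.sum_div,
          Finset.sum_sub_distrib, Finset.sum_const]
        simp [mul_comm]
      rw [h4, hA] at h3
      simpa using h3
    have h1 : 1 - Real.exp S ≤ -S := by linarith [Real.add_one_le_exp S]
    calc A^m - ∏ i, a i = A^m * (1 - Real.exp S) := by rw [hprod]; ring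
    _ ≤ A^m * (-S) := mul_le_mul_of_nonneg_left h1 hApow
    _ ≤ _ := mul_le_mul_of_nonneg_left hnegS hApow

/-- Simple upper bound on the integrated AM–GM gap:
`0 ≤ ∫₀¹ t^(q-1)(1-ᾱ+ᾱ t^β)^m dt - ∫₀¹ t^(q-1)∏ᵢ(1-αᵢ+αᵢ t^β) dt
   ≤ (m/2) V ∫₀¹ t^(q-1)(1-ᾱ+ᾱ t^β)^m (1-t^β)²/t^(2β) dt`. -/
theorem integrated_amgm_gap_simple (m : ℕ) (hm : 0 < m) (α : Fin m → ℝ)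
    (hα : ∀ i, α i ∈ Set.Icc (0:ℝ) 1) (β q : ℝ) (hβ : 0 < β) (hq : 0 < q)
    (ᾱ V : ℝ) (hᾱ : ᾱ = (∑ i, α i) / m) (hV : V = (∑ i, (α i - ᾱ) ^ 2) / m)
    (hint : IntervalIntegrable
      (fun t : ℝ => t ^ (q - 1) * (1 - ᾱ + ᾱ * t ^ β) ^ m * (1 - t ^ β) ^ 2 / t ^ (2 * β))
      MeasureTheory.volume 0 1) :
    0 ≤ (∫ t in (0:ℝ)..1, t ^ (q - 1) * (1 - ᾱ + ᾱ * t ^ β) ^ m) -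
        (∫ t in (0:ℝ)..1, t ^ (q - 1) * ∏ i, (1 - α i + α i * t ^ β)) ∧
      (∫ t in (0:ℝ)..1, t ^ (q - 1) * (1 - ᾱ + ᾱ * t ^ β) ^ m) -
        (∫ t in (0:ℝ)..1, t ^ (q - 1) * ∏ i, (1 - α i + α i * t ^ β)) ≤
        (m / 2) * V *
          ∫ t in (0:ℝ)..1,
            t ^ (q - 1) * (1 - ᾱ + ᾱ * t ^ β) ^ m * (1 - t ^ β) ^ 2 / t ^ (2 * β) := by
  have hm' : (0:ℝ) < m := by exact_mod_cast hm
  -- bounds on ᾱ and V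
  have hᾱ0 : 0 ≤ ᾱ := by
    rw [hᾱ]
    apply div_nonneg _ hm'.le
    exact Finset.sum_nonneg fun i _ => (hα i).1
  have hᾱ1 : ᾱ ≤ 1 := by
    rw [hᾱ, div_le_one hm']
    calc ∑ i, α i ≤ ∑ _i : Fin m, (1:ℝ) := Finset.sum_le_sum fun i _ => (hα i).2
    _ = m := by simp
  have hV0 : 0 ≤ V := by
    rw [hV]
    positivity
  have hVm : (∑ i, (α i - ᾱ)^2) = (m:ℝ) * V := by
    rw [hV]
    field_simp
  -- pointwise facts on Ioc 0 1
  have key : ∀ t ∈ Set.Ioc (0:ℝ) 1,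
      (∏ i, (1 - α i + α i * t^β)) ≤ (1 - ᾱ + ᾱ * t^β)^m ∧
      t^(q-1) * (1 - ᾱ + ᾱ * t^β)^m - t^(q-1) * ∏ i, (1 - α i + α i * t^β) ≤
        ((m:ℝ)/2) * V * (t^(q-1) * (1 - ᾱ + ᾱ * t^β)^m * (1 - t^β)^2 / t^(2*β)) := by
    intro t ht
    have hx : 0 < t^β := Real.rpow_pos_of_pos ht.1 β
    have hx1 : t^β ≤ 1 := Real.rpow_le_one ht.1.le ht.2 hβ.le
    set x := t^β with hxdef
    have ha : ∀ i, x ≤ 1 - α i + α i * x := by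
      intro i
      nlinarith [(hα i).1, (hα i).2]
    have hAsum : (m:ℝ) * (1 - ᾱ + ᾱ*x) = ∑ i, (1 - α i + α i * x) := by
      rw [hᾱ, Finset.sum_add_distrib, Finset.sum_sub_distrib, Finset.sum_const,
        ← Finset.sum_mul, Finset.card_univ, Fintype.card_fin]
      field_simp
      simp
    obtain ⟨h1, h2⟩ := prod_gap m hm _ x _ hx ha hAsum
    refine ⟨h1, ?_⟩
    have hsum2 : ∑ i, ((1 - α i + α i * x) - (1 - ᾱ + ᾱ*x))^2 = (m:ℝ)*V*(1-x)^2 := by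
      calc ∑ i, ((1 - α i + α i * x) - (1 - ᾱ + ᾱ*x))^2
          = ∑ i, (α i - ᾱ)^2 * (1-x)^2 := Finset.sum_congr rfl fun i _ => by ring
      _ = (∑ i, (α i - ᾱ)^2) * (1-x)^2 := by rw [Finset.sum_mul]
      _ = (m:ℝ)*V*(1-x)^2 := by rw [hVm]
    rw [hsum2] at h2
    have ht2β : t^(2*β) = x^2 := by
      rw [mul_comm, Real.rpow_mul ht.1.le, hxdef,
        show (2:ℝ) = ((2:ℕ):ℝ) by norm_num, Real.rpow_natCast]
    rw [ht2β]
    have htq : (0:ℝ) ≤ t^(q-1) := Real.rpow_nonneg ht.1.le _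
    have := mul_le_mul_of_nonneg_left h2 htq
    calc t^(q-1) * (1 - ᾱ + ᾱ*x)^m - t^(q-1) * ∏ i, (1 - α i + α i * x)
        = t^(q-1) * ((1 - ᾱ + ᾱ*x)^m - ∏ i, (1 - α i + α i * x)) := by ring
    _ ≤ t^(q-1) * ((1 - ᾱ + ᾱ*x)^m * ((m:ℝ)*V*(1-x)^2/(2*x^2))) := this
    _ = ((m:ℝ)/2) * V * (t^(q-1) * (1 - ᾱ + ᾱ*x)^m * (1-x)^2 / x^2) := by
      field_simp
  -- integrability
  have hbase : IntervalIntegrable (fun t : ℝ => t ^ (q-1)) volume 0 1 :=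
    intervalIntegral.intervalIntegrable_rpow' (by linarith)
  have hIoc : Set.uIoc (0:ℝ) 1 = Set.Ioc (0:ℝ) 1 := Set.uIoc_of_le zero_le_one
  have haemem : ∀ᵐ t ∂(volume.restrict (Set.uIoc (0:ℝ) 1)), t ∈ Set.Ioc (0:ℝ) 1 := by
    rw [hIoc]
    exact ae_restrict_mem measurableSet_Ioc
  have hbound : ∀ t ∈ Set.Ioc (0:ℝ) 1, ∀ i, 0 ≤ 1 - α i + α i * t^β ∧ 1 - α i + α i * t^β ≤ 1 := by
    intro t ht i
    have hx : 0 < t^β := Real.rpow_pos_of_pos ht.1 β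
    have hx1 : t^β ≤ 1 := Real.rpow_le_one ht.1.le ht.2 hβ.le
    constructor <;> nlinarith [(hα i).1, (hα i).2]
  have hboundA : ∀ t ∈ Set.Ioc (0:ℝ) 1, 0 ≤ 1 - ᾱ + ᾱ * t^β ∧ 1 - ᾱ + ᾱ * t^β ≤ 1 := by
    intro t ht
    have hx : 0 < t^β := Real.rpow_pos_of_pos ht.1 β
    have hx1 : t^β ≤ 1 := Real.rpow_le_one ht.1.le ht.2 hβ.le
    constructor <;> nlinarith
  have hIF : IntervalIntegrable (fun t : ℝ => t^(q-1) * (1 - ᾱ + ᾱ * t^β)^m) volume 0 1 := by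
    apply hbase.mono_fun
    · apply Measurable.aestronglyMeasurable
      fun_prop
    · filter_upwards [haemem] with t ht
      have htq : (0:ℝ) ≤ t^(q-1) := Real.rpow_nonneg ht.1.le _
      obtain ⟨hA0, hA1⟩ := hboundA t ht
      have : (1 - ᾱ + ᾱ * t^β)^m ≤ 1 := pow_le_one₀ hA0 hA1
      simp only [norm_eq_abs]
      rw [abs_of_nonneg (by positivity), abs_of_nonneg htq]
      nlinarith [pow_nonneg hA0 m]
  have hIG : IntervalIntegrable (fun t : ℝ => t^(q-1) * ∏ i, (1 - α i + α i * t^β)) volume 0 1 := by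
    apply hbase.mono_fun
    · apply Measurable.aestronglyMeasurable
      fun_prop
    · filter_upwards [haemem] with t ht
      have htq : (0:ℝ) ≤ t^(q-1) := Real.rpow_nonneg ht.1.le _
      have hp0 : 0 ≤ ∏ i, (1 - α i + α i * t^β) :=
        Finset.prod_nonneg fun i _ => (hbound t ht i).1
      have hp1 : ∏ i, (1 - α i + α i * t^β) ≤ 1 :=
        Finset.prod_le_one (fun i _ => (hbound t ht i).1) (fun i _ => (hbound t ht i).2)
      simp only [norm_eq_abs]
      rw [abs_of_nonneg (by positivity), abs_of_nonneg htq]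
      nlinarith
  -- ae on Icc restricted measure
  have haeIcc : ∀ᵐ t ∂(volume.restrict (Set.Icc (0:ℝ) 1)), t ∈ Set.Ioc (0:ℝ) 1 := by
    have h1 := ae_restrict_mem (μ := volume) (measurableSet_Icc (a := (0:ℝ)) (b := 1))
    have h2 : ∀ᵐ t : ℝ ∂volume, t ≠ 0 := by
      rw [MeasureTheory.ae_iff]
      simp [MeasureTheory.measure_singleton (0:ℝ)]
    filter_upwards [h1, ae_restrict_of_ae h2] with t ht1 ht2
    exact ⟨lt_of_le_of_ne ht1.1 (Ne.symm ht2), ht1.2⟩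
  -- part 1
  have part1 : (∫ t in (0:ℝ)..1, t ^ (q - 1) * ∏ i, (1 - α i + α i * t ^ β)) ≤
      ∫ t in (0:ℝ)..1, t ^ (q - 1) * (1 - ᾱ + ᾱ * t ^ β) ^ m := by
    apply intervalIntegral.integral_mono_ae_restrict zero_le_one hIG hIF
    filter_upwards [haeIcc] with t ht
    exact mul_le_mul_of_nonneg_left (key t ht).1 (Real.rpow_nonneg ht.1.le _)
  refine ⟨by linarith, ?_⟩
  -- part 2
  have e1 : (∫ t in (0:ℝ)..1, (t^(q-1) * (1 - ᾱ + ᾱ * t^β)^m -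
        t^(q-1) * ∏ i, (1 - α i + α i * t^β))) =
      (∫ t in (0:ℝ)..1, t ^ (q - 1) * (1 - ᾱ + ᾱ * t ^ β) ^ m) -
      (∫ t in (0:ℝ)..1, t ^ (q - 1) * ∏ i, (1 - α i + α i * t ^ β)) :=
    intervalIntegral.integral_sub hIF hIG
  have e2 : (∫ t in (0:ℝ)..1, ((m:ℝ)/2) * V *
        (t ^ (q - 1) * (1 - ᾱ + ᾱ * t ^ β) ^ m * (1 - t ^ β) ^ 2 / t ^ (2 * β))) =
      ((m:ℝ)/2) * V * ∫ t in (0:ℝ)..1,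
        t ^ (q - 1) * (1 - ᾱ + ᾱ * t ^ β) ^ m * (1 - t ^ β) ^ 2 / t ^ (2 * β) :=
    intervalIntegral.integral_const_mul _ _
  have mono2 := intervalIntegral.integral_mono_ae_restrict zero_le_one (hIF.sub hIG)
    (hint.const_mul (((m:ℝ)/2) * V)) ?_
  · rw [e2] at mono2
    calc _ = _ := e1.symm
    _ ≤ _ := mono2
  · filter_upwards [haeIcc] with t ht
    exact (key t ht).2
end

section
/- Let {β₁,…,β_m} take d distinct values b₁,…,b_d, with groups S_j = {i : βᵢ = b_j} of sizes m_j and group means ᾱ_j = (1/m_j)Σ_{i∈S_j}αᵢ. For q > 0, ∫₀¹ t^{q-1}∏ᵢ(1 - αᵢ + αᵢ t^{βᵢ}) dt ≤ ∏_{j=1}^d [ ∫₀¹ t^{q-1}(1 - ᾱ_j + ᾱ_j t^{b_j})^m dt ]^{m_j/m}, where m = Σ_j m_j. -/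
open Finset MeasureTheory

private lemma amgm_aux {ι : Type*} (s : Finset ι) (z : ι → ℝ) (hz : ∀ i ∈ s, 0 ≤ z i) :
    ∏ i ∈ s, z i ≤ ((∑ i ∈ s, z i) / (s.card : ℝ)) ^ s.card := by
  rcases Finset.eq_empty_or_nonempty s with rfl | hs
  · simp
  have hc : (0:ℝ) < (s.card : ℝ) := by exact_mod_cast Finset.card_pos.mpr hs
  have hw : ∑ _i ∈ s, (1:ℝ) / (s.card : ℝ) = 1 := by
    rw [Finset.sum_const, nsmul_eq_mul]
    field_simp
  have h1 := Real.geom_mean_le_arith_mean_weighted s (fun _ => (1:ℝ) / (s.card : ℝ)) z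
    (fun _ _ => by positivity) hw hz
  rw [Real.finset_prod_rpow s z hz] at h1
  have h2 : ∑ i ∈ s, (1:ℝ) / (s.card : ℝ) * z i = (∑ i ∈ s, z i) / (s.card : ℝ) := by
    rw [← Finset.mul_sum]; ring
  rw [h2] at h1
  have hprod : (0:ℝ) ≤ ∏ i ∈ s, z i := Finset.prod_nonneg hz
  calc ∏ i ∈ s, z i
      = ((∏ i ∈ s, z i) ^ ((1:ℝ) / (s.card : ℝ))) ^ (s.card : ℕ) := by
        rw [← Real.rpow_natCast ((∏ i ∈ s, z i) ^ ((1:ℝ) / (s.card : ℝ))),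
          ← Real.rpow_mul hprod, one_div, inv_mul_cancel₀ hc.ne', Real.rpow_one]
    _ ≤ ((∑ i ∈ s, z i) / (s.card : ℝ)) ^ (s.card : ℕ) :=
        pow_le_pow_left₀ (Real.rpow_nonneg hprod _) h1 _

/-- Binned Hölder bound: if the exponents `βᵢ` take the `d` distinct values
`b₁,…,b_d`, with groups `S_j = {i : βᵢ = b_j}` of sizes `m_j` and group means
`ᾱ_j`, then for `q > 0`,
`∫₀¹ t^{q-1} ∏ᵢ (1-αᵢ+αᵢ t^{βᵢ}) dt
  ≤ ∏_j [∫₀¹ t^{q-1} (1-ᾱ_j+ᾱ_j t^{b_j})^m dt]^{m_j/m}`. -/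
theorem binned_holder_bound (m d : ℕ) (hm : 0 < m)
    (α βv : Fin m → ℝ) (b : Fin d → ℝ)
    (hα : ∀ i, α i ∈ Set.Icc (0:ℝ) 1) (hb : ∀ j, 0 < b j)
    (hbinj : Function.Injective b) (hβ : ∀ i, ∃ j, βv i = b j)
    (q : ℝ) (hq : 0 < q) :
    (∫ t in (0:ℝ)..1, t ^ (q - 1) * ∏ i, (1 - α i + α i * t ^ βv i)) ≤
      ∏ j : Fin d,
        (∫ t in (0:ℝ)..1,
            t ^ (q - 1) *
              (1 - (∑ i ∈ univ.filter (fun i => βv i = b j), α i) /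
                    ((univ.filter (fun i => βv i = b j)).card : ℝ) +
                (∑ i ∈ univ.filter (fun i => βv i = b j), α i) /
                    ((univ.filter (fun i => βv i = b j)).card : ℝ) * t ^ b j) ^ m) ^
          (((univ.filter (fun i => βv i = b j)).card : ℝ) / (m : ℝ)) := by
  have hm' : (0:ℝ) < m := by exact_mod_cast hm
  choose c hc using hβ
  have hfilter : ∀ j : Fin d,
      (univ.filter (fun i => βv i = b j)) = (univ.filter (fun i => c i = j)) := by
    intro j
    apply Finset.filter_congr
    intro i _
    rw [hc i]
    exact ⟨fun h => hbinj h, fun h => by rw [h]⟩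
  set n : Fin d → ℕ := fun j => (univ.filter (fun i => βv i = b j)).card with hn
  set A : Fin d → ℝ :=
    fun j => (∑ i ∈ univ.filter (fun i => βv i = b j), α i) / (n j : ℝ) with hA
  set p : Fin d → ℝ := fun j => (n j : ℝ) / (m : ℝ) with hp
  set g : Fin d → ℝ → ℝ := fun j t => 1 - A j + A j * t ^ b j with hg
  set F : Fin d → ℝ → ℝ := fun j t => t ^ (q - 1) * g j t ^ m with hF
  set H : ℝ → ℝ := fun t => t ^ (q - 1) * ∏ i, (1 - α i + α i * t ^ βv i) with hH
  have hsum_n : ∑ j, n j = m := by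
    have h := Finset.card_eq_sum_card_fiberwise
      (f := c) (s := (univ : Finset (Fin m))) (t := (univ : Finset (Fin d)))
      (fun i _ => mem_univ _)
    simp only [hn]
    simp only [hfilter]
    simp [Finset.card_univ] at h
    exact h.symm
  have hA0 : ∀ j, 0 ≤ A j := fun j =>
    div_nonneg (Finset.sum_nonneg fun i _ => (hα i).1) (Nat.cast_nonneg _)
  have hA1 : ∀ j, A j ≤ 1 := by
    intro j
    rcases eq_or_ne ((n j : ℝ)) 0 with h | h
    · simp only [hA, h, div_zero]
      norm_num
    · have hpos : (0:ℝ) < (n j : ℝ) := lt_of_le_of_ne (Nat.cast_nonneg _) (Ne.symm h)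
      simp only [hA]
      rw [div_le_one hpos]
      calc ∑ i ∈ univ.filter (fun i => βv i = b j), α i
          ≤ ∑ _i ∈ univ.filter (fun i => βv i = b j), (1:ℝ) :=
            Finset.sum_le_sum fun i _ => (hα i).2
        _ = (n j : ℝ) := by simp [hn]
  have hg0 : ∀ j, ∀ t : ℝ, 0 ≤ t → 0 ≤ g j t := by
    intro j t ht
    have h1 : 0 ≤ A j * t ^ b j := mul_nonneg (hA0 j) (Real.rpow_nonneg ht _)
    simp only [hg]
    linarith [hA1 j]
  have hg1 : ∀ j, ∀ t : ℝ, 0 ≤ t → t ≤ 1 → g j t ≤ 1 := by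
    intro j t ht ht1
    have h2 : t ^ b j ≤ 1 := Real.rpow_le_one ht ht1 (hb j).le
    have h3 : A j * t ^ b j ≤ A j * 1 := mul_le_mul_of_nonneg_left h2 (hA0 j)
    simp only [hg]
    linarith
  have hp0 : ∀ j, 0 ≤ p j := fun j => div_nonneg (Nat.cast_nonneg _) (Nat.cast_nonneg _)
  have hsum_p : ∑ j, p j = 1 := by
    simp only [hp]
    rw [← Finset.sum_div]
    rw [show ∑ j, ((n j : ℝ)) = (m : ℝ) by exact_mod_cast congrArg Nat.cast hsum_n]
    exact div_self hm'.ne'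
  -- pointwise AM-GM
  have hzi : ∀ (t : ℝ), 0 ≤ t → ∀ i : Fin m, 0 ≤ 1 - α i + α i * t ^ βv i := by
    intro t ht i
    have h1 : 0 ≤ α i * t ^ βv i := mul_nonneg (hα i).1 (Real.rpow_nonneg ht _)
    linarith [(hα i).2]
  have hptA : ∀ t : ℝ, 0 ≤ t →
      (∏ i, (1 - α i + α i * t ^ βv i)) ≤ ∏ j, g j t ^ n j := by
    intro t ht
    calc (∏ i, (1 - α i + α i * t ^ βv i))
        = ∏ j : Fin d, ∏ i ∈ univ.filter (fun i => c i = j),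
            (1 - α i + α i * t ^ βv i) :=
          (Finset.prod_fiberwise_of_maps_to (fun i _ => mem_univ (c i)) _).symm
      _ ≤ ∏ j, g j t ^ n j := by
          apply Finset.prod_le_prod
          · intro j _
            exact Finset.prod_nonneg fun i _ => hzi t ht i
          · intro j _
            have hcard : (univ.filter (fun i => c i = j)).card = n j := by
              simp only [hn, hfilter]
            have key := amgm_aux (univ.filter (fun i => c i = j))
              (fun i => 1 - α i + α i * t ^ βv i) (fun i _ => hzi t ht i)
            rcases eq_or_ne (n j) 0 with h0 | h0
            · have hempty : (univ.filter (fun i => c i = j)) = (∅ : Finset (Fin m)) := by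
                apply Finset.card_eq_zero.mp
                rw [hcard, h0]
              rw [hempty] at key ⊢
              simpa [h0] using key
            · have hnpos : (0:ℝ) < (n j : ℝ) := by
                exact_mod_cast Nat.pos_of_ne_zero h0
              have hsum : ∑ i ∈ univ.filter (fun i => c i = j),
                  (1 - α i + α i * t ^ βv i)
                  = (n j : ℝ) - (∑ i ∈ univ.filter (fun i => βv i = b j), α i)
                    + (∑ i ∈ univ.filter (fun i => βv i = b j), α i) * t ^ b j := by
                rw [← hfilter]
                rw [Finset.sum_congr rfl (fun i hi => by
                  rw [show βv i = b j from (Finset.mem_filter.mp hi).2])]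
                rw [Finset.sum_add_distrib, Finset.sum_sub_distrib, ← Finset.sum_mul,
                  Finset.sum_const, nsmul_eq_mul, mul_one]
                try simp [hn]
              have hmean : (∑ i ∈ univ.filter (fun i => c i = j),
                  (1 - α i + α i * t ^ βv i)) / ((univ.filter (fun i => c i = j)).card : ℝ)
                  = g j t := by
                rw [hcard, hsum]
                simp only [hg, hA]
                field_simp
                try ring
              rw [hmean, hcard] at key
              exact key
  -- pointwise product split
  have hptB : ∀ t : ℝ, 0 < t →
      t ^ (q - 1) * ∏ j, g j t ^ n j = ∏ j, F j t ^ p j := by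
    intro t ht
    have h1 : ∀ j, F j t ^ p j = t ^ ((q - 1) * p j) * g j t ^ ((n j : ℝ)) := by
      intro j
      simp only [hF]
      rw [Real.mul_rpow (Real.rpow_nonneg ht.le _) (pow_nonneg (hg0 j t ht.le) m)]
      rw [← Real.rpow_natCast (g j t) m, ← Real.rpow_mul ht.le, ← Real.rpow_mul (hg0 j t ht.le)]
      congr 1
      simp only [hp]
      field_simp
    rw [Finset.prod_congr rfl (fun j _ => h1 j), Finset.prod_mul_distrib,
      ← Real.rpow_sum_of_pos ht, ← Finset.mul_sum, hsum_p, mul_one]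
    congr 1
    exact Finset.prod_congr rfl fun j _ => (Real.rpow_natCast _ _).symm
  -- measurability
  have hgm : ∀ j, Measurable (g j) := by
    intro j
    simp only [hg]
    fun_prop
  have hFm : ∀ j, Measurable (F j) := by
    intro j
    simp only [hF, hg]
    fun_prop
  have hHm : Measurable H := by
    simp only [hH]
    fun_prop
  -- nonnegativity of F
  have hF0 : ∀ j, ∀ t : ℝ, 0 ≤ t → 0 ≤ F j t := by
    intro j t ht
    simp only [hF]
    exact mul_nonneg (Real.rpow_nonneg ht _) (pow_nonneg (hg0 j t ht) m)
  -- integrability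
  have hbase : IntegrableOn (fun t : ℝ => t ^ (q - 1)) (Set.Ioc 0 1) := by
    have h := intervalIntegral.intervalIntegrable_rpow'
      (a := 0) (b := 1) (show (-1:ℝ) < q - 1 by linarith)
    exact (intervalIntegrable_iff_integrableOn_Ioc_of_le zero_le_one).mp h
  have hFint : ∀ j, IntegrableOn (F j) (Set.Ioc 0 1) := by
    intro j
    refine MeasureTheory.Integrable.mono hbase ((hFm j).aestronglyMeasurable) ?_
    rw [ae_restrict_iff' measurableSet_Ioc]
    apply ae_of_all
    intro t ht
    obtain ⟨ht0, ht1⟩ := ht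
    rw [Real.norm_eq_abs, Real.norm_eq_abs, abs_of_nonneg (hF0 j t ht0.le),
      abs_of_nonneg (Real.rpow_nonneg ht0.le _)]
    calc F j t = t ^ (q - 1) * g j t ^ m := by simp only [hF]
      _ ≤ t ^ (q - 1) * 1 := by
          apply mul_le_mul_of_nonneg_left _ (Real.rpow_nonneg ht0.le _)
          calc g j t ^ m ≤ 1 ^ m :=
              pow_le_pow_left₀ (hg0 j t ht0.le) (hg1 j t ht0.le ht1) m
            _ = 1 := one_pow m
      _ = t ^ (q - 1) := mul_one _
  -- ae nonnegativity
  have hFnn : ∀ j, 0 ≤ᵐ[volume.restrict (Set.Ioc (0:ℝ) 1)] F j := by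
    intro j
    rw [Filter.EventuallyLE, ae_restrict_iff' measurableSet_Ioc]
    exact ae_of_all _ fun t ht => hF0 j t ht.1.le
  have hHnn : 0 ≤ᵐ[volume.restrict (Set.Ioc (0:ℝ) 1)] H := by
    rw [Filter.EventuallyLE, ae_restrict_iff' measurableSet_Ioc]
    apply ae_of_all
    intro t ht
    simp only [hH, Pi.zero_apply]
    exact mul_nonneg (Real.rpow_nonneg ht.1.le _)
      (Finset.prod_nonneg fun i _ => hzi t ht.1.le i)
  -- main lintegral estimate
  have key : (∫⁻ t in Set.Ioc (0:ℝ) 1, ENNReal.ofReal (H t))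
      ≤ ∏ j, (ENNReal.ofReal (∫ t in Set.Ioc (0:ℝ) 1, F j t)) ^ p j := by
    have step1 : (∫⁻ t in Set.Ioc (0:ℝ) 1, ENNReal.ofReal (H t))
        ≤ ∫⁻ t in Set.Ioc (0:ℝ) 1, ∏ j, (ENNReal.ofReal (F j t)) ^ p j := by
      apply lintegral_mono_ae
      rw [ae_restrict_iff' measurableSet_Ioc]
      apply ae_of_all
      intro t ht
      obtain ⟨ht0, ht1⟩ := ht
      have hHle : H t ≤ ∏ j, F j t ^ p j := by
        rw [← hptB t ht0]
        simp only [hH]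
        exact mul_le_mul_of_nonneg_left (hptA t ht0.le) (Real.rpow_nonneg ht0.le _)
      calc ENNReal.ofReal (H t) ≤ ENNReal.ofReal (∏ j, F j t ^ p j) :=
            ENNReal.ofReal_le_ofReal hHle
        _ = ∏ j, (ENNReal.ofReal (F j t)) ^ p j := by
            rw [ENNReal.ofReal_prod_of_nonneg
              (fun j _ => Real.rpow_nonneg (hF0 j t ht0.le) _)]
            exact Finset.prod_congr rfl fun j _ =>
              (ENNReal.ofReal_rpow_of_nonneg (hF0 j t ht0.le) (hp0 j)).symm
    have step2 := ENNReal.lintegral_prod_norm_pow_le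
      (μ := volume.restrict (Set.Ioc (0:ℝ) 1)) univ
      (f := fun j t => ENNReal.ofReal (F j t))
      (fun j _ => ((hFm j).ennreal_ofReal).aemeasurable) hsum_p (fun j _ => hp0 j)
    calc (∫⁻ t in Set.Ioc (0:ℝ) 1, ENNReal.ofReal (H t))
        ≤ ∫⁻ t in Set.Ioc (0:ℝ) 1, ∏ j, (ENNReal.ofReal (F j t)) ^ p j := step1
      _ ≤ ∏ j, (∫⁻ t in Set.Ioc (0:ℝ) 1, ENNReal.ofReal (F j t)) ^ p j := step2
      _ = ∏ j, (ENNReal.ofReal (∫ t in Set.Ioc (0:ℝ) 1, F j t)) ^ p j := by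
          refine Finset.prod_congr rfl fun j _ => ?_
          rw [MeasureTheory.ofReal_integral_eq_lintegral_ofReal (hFint j) (hFnn j)]
  have hRne : (∏ j, (ENNReal.ofReal (∫ t in Set.Ioc (0:ℝ) 1, F j t)) ^ p j) ≠ ⊤ := by
    refine (ENNReal.prod_lt_top ?_).ne
    intro j _
    exact (ENNReal.rpow_ne_top_of_nonneg (hp0 j) ENNReal.ofReal_ne_top).lt_top
  have hIj_nonneg : ∀ j, 0 ≤ ∫ t in Set.Ioc (0:ℝ) 1, F j t := fun j =>
    integral_nonneg_of_ae (hFnn j)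
  have final : (∫ t in (0:ℝ)..1, H t) ≤ ∏ j, (∫ t in (0:ℝ)..1, F j t) ^ p j := by
    have hLHS : (∫ t in (0:ℝ)..1, H t)
        = (∫⁻ t in Set.Ioc (0:ℝ) 1, ENNReal.ofReal (H t)).toReal := by
      rw [intervalIntegral.integral_of_le zero_le_one]
      exact integral_eq_lintegral_of_nonneg_ae hHnn hHm.aestronglyMeasurable.restrict
    rw [hLHS]
    calc (∫⁻ t in Set.Ioc (0:ℝ) 1, ENNReal.ofReal (H t)).toReal
        ≤ (∏ j, (ENNReal.ofReal (∫ t in Set.Ioc (0:ℝ) 1, F j t)) ^ p j).toReal :=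
          ENNReal.toReal_mono hRne key
      _ = ∏ j, (∫ t in (0:ℝ)..1, F j t) ^ p j := by
          rw [ENNReal.toReal_prod]
          refine Finset.prod_congr rfl fun j _ => ?_
          rw [← ENNReal.toReal_rpow, ENNReal.toReal_ofReal (hIj_nonneg j),
            intervalIntegral.integral_of_le zero_le_one]
  simpa only [hH, hF, hg, hA, hn, hp] using final
end
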